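/- arXiv:1401.1062 — 3 statements merged into one kernel-verified Lean document; each statement's English description precedes it below -/
import Mathlib

section
/- Let φ ∈ O_K⟨x⟩, k, n ≥ 1, ψ = φ^{∘k}, and suppose x ∈ O_K satisfies ψ(x) ≡ x (mod πⁿ). Define a_n(x) = ψ'(x) and b_n(x) = (ψ(x) − x)/πⁿ ∈ O_K. Then for all t ∈ O_K: b_n(x + πⁿt) ≡ b_n(x) + t(a_n(x) − 1) (mod πⁿ). -/
open Filter Topology

/-- Evaluation of a convergent power series on the valuation ring. -/
noncomputable def evalPS {K : Type*} [NormedField K] (a : ℕ → K) (x : K) : K :=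
  ∑' i : ℕ, a i * x ^ i

section Aux

variable {K : Type*} [NontriviallyNormedField K] [IsUltrametricDist K] [CompleteSpace K]

open IsUltrametricDist

/-- In a complete ultrametric field, a sequence tending to zero is summable. -/
lemma aux_summable {f : ℕ → K} (hf : Tendsto (fun i => ‖f i‖) atTop (𝓝 0)) :
    Summable f := by
  rw [summable_iff_vanishing]
  intro e he
  rcases Metric.mem_nhds_iff.mp he with ⟨ε, hε, hsub⟩
  rcases (Metric.tendsto_atTop.mp hf (ε / 2) (by linarith)) with ⟨N, hN⟩
  refine ⟨Finset.range N, fun s hs => ?_⟩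
  apply hsub
  simp only [Metric.mem_ball, dist_zero_right]
  have hbound : ‖∑ i ∈ s, f i‖ ≤ ε / 2 := by
    refine norm_sum_le_of_forall_le_of_nonneg (by linarith) (fun i hi => ?_)
    have hiN : N ≤ i := by
      by_contra hlt
      exact (Finset.disjoint_left.mp hs hi) (Finset.mem_range.mpr (not_le.mp hlt))
    have := hN i hiN
    rw [Real.dist_eq, sub_zero, abs_of_nonneg (norm_nonneg _)] at this
    exact this.le
  linarith

variable {a : ℕ → K}

/-- Formal derivative of the power series, evaluated at `x`. -/
noncomputable def dPS (a : ℕ → K) (x : K) : K :=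
  ∑' i : ℕ, ((i : K) + 1) * a (i + 1) * x ^ i

lemma aux_norm_a0 (ha0 : Tendsto a atTop (𝓝 0)) : Tendsto (fun i => ‖a i‖) atTop (𝓝 0) := by
  simpa [norm_zero, Function.comp_def] using (continuous_norm.tendsto (0 : K)).comp ha0

lemma aux_sum1' (ha0 : Tendsto a atTop (𝓝 0)) {x : K} (hx : ‖x‖ ≤ 1) : Summable fun i => a i * x ^ i := by
  refine aux_summable (squeeze_zero (fun i => norm_nonneg _) (fun i => ?_) (aux_norm_a0 ha0))
  calc ‖a i * x ^ i‖ = ‖a i‖ * ‖x ^ i‖ := norm_mul _ _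
    _ ≤ ‖a i‖ * 1 := by
        have h2 : ‖x ^ i‖ ≤ 1 := (norm_pow_le x i).trans (pow_le_one₀ (norm_nonneg _) hx)
        exact mul_le_mul_of_nonneg_left h2 (norm_nonneg _)
    _ = ‖a i‖ := mul_one _

lemma aux_term_deriv_bound (ha : ∀ i, ‖a i‖ ≤ 1) {x : K} (hx : ‖x‖ ≤ 1) (i : ℕ) :
    ‖((i : K) + 1) * a (i + 1) * x ^ i‖ ≤ ‖a (i + 1)‖ := by
  have h1 : ‖((i : K) + 1)‖ ≤ 1 := by
    have := IsUltrametricDist.norm_natCast_le_one K (i + 1)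
    simpa [Nat.cast_add, Nat.cast_one] using this
  have h2 : ‖x ^ i‖ ≤ 1 := (norm_pow_le x i).trans (pow_le_one₀ (norm_nonneg _) hx)
  calc ‖((i : K) + 1) * a (i + 1) * x ^ i‖
      = ‖((i : K) + 1)‖ * ‖a (i + 1)‖ * ‖x ^ i‖ := by rw [norm_mul, norm_mul]
    _ ≤ 1 * ‖a (i + 1)‖ * 1 := by
        apply mul_le_mul (mul_le_mul h1 le_rfl (norm_nonneg _) zero_le_one) h2
          (norm_nonneg _)
        positivity
    _ = ‖a (i + 1)‖ := by ring

lemma aux_sum2 (ha : ∀ i, ‖a i‖ ≤ 1) (ha0 : Tendsto a atTop (𝓝 0)) {x : K} (hx : ‖x‖ ≤ 1) :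
    Summable fun i : ℕ => ((i : K) + 1) * a (i + 1) * x ^ i := by
  refine aux_summable (squeeze_zero (fun i => norm_nonneg _)
    (fun i => aux_term_deriv_bound ha hx i) ?_)
  exact (aux_norm_a0 ha0).comp (tendsto_add_atTop_nat 1)

/-- `‖evalPS a x‖ ≤ 1` on the unit ball. -/
lemma evalPS_bound (ha : ∀ i, ‖a i‖ ≤ 1) {x : K} (hx : ‖x‖ ≤ 1) : ‖evalPS a x‖ ≤ 1 := by
  refine norm_tsum_le_of_forall_le_of_nonneg zero_le_one (fun i => ?_)
  calc ‖a i * x ^ i‖ = ‖a i‖ * ‖x ^ i‖ := norm_mul _ _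
    _ ≤ 1 * 1 := mul_le_mul (ha i)
        ((norm_pow_le x i).trans (pow_le_one₀ (norm_nonneg _) hx)) (norm_nonneg _) zero_le_one
    _ = 1 := mul_one _

lemma dPS_bound (ha : ∀ i, ‖a i‖ ≤ 1) {x : K} (hx : ‖x‖ ≤ 1) : ‖dPS a x‖ ≤ 1 := by
  refine norm_tsum_le_of_forall_le_of_nonneg zero_le_one (fun i => ?_)
  exact (aux_term_deriv_bound ha hx i).trans (ha _)

/-- `‖(x+h)^i - x^i‖ ≤ ‖h‖` on the unit ball. -/
lemma aux_pow_lip {x h : K} (hx : ‖x‖ ≤ 1) (hh : ‖h‖ ≤ 1) (i : ℕ) :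
    ‖(x + h) ^ i - x ^ i‖ ≤ ‖h‖ := by
  induction i with
  | zero => simp
  | succ i ih =>
    have key : (x + h) ^ (i + 1) - x ^ (i + 1)
        = (x + h) * ((x + h) ^ i - x ^ i) + h * x ^ i := by ring
    rw [key]
    refine (norm_add_le_max _ _).trans (max_le ?_ ?_)
    · calc ‖(x + h) * ((x + h) ^ i - x ^ i)‖ = ‖x + h‖ * ‖(x + h) ^ i - x ^ i‖ := norm_mul _ _
        _ ≤ 1 * ‖h‖ := mul_le_mul ((norm_add_le_max x h).trans (max_le hx hh)) ih
            (norm_nonneg _) zero_le_one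
        _ = ‖h‖ := one_mul _
    · calc ‖h * x ^ i‖ = ‖h‖ * ‖x ^ i‖ := norm_mul _ _
        _ ≤ ‖h‖ * 1 := mul_le_mul_of_nonneg_left
            ((norm_pow_le x i).trans (pow_le_one₀ (norm_nonneg _) hx)) (norm_nonneg _)
        _ = ‖h‖ := mul_one _

/-- Taylor remainder bound for powers. -/
lemma aux_pow_taylor {x h : K} (hx : ‖x‖ ≤ 1) (hh : ‖h‖ ≤ 1) (i : ℕ) :
    ‖(x + h) ^ i - x ^ i - (i : K) * x ^ (i - 1) * h‖ ≤ ‖h‖ ^ 2 := by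
  induction i with
  | zero => simp
  | succ i ih =>
    rcases Nat.eq_zero_or_pos i with hi | hi
    · subst hi; simp
    · rw [show ((i + 1 : ℕ) : K) = (i : K) + 1 by push_cast; ring]
      have hpow : x ^ (i - 1) * x = x ^ i := by
        rw [← pow_succ]
        congr 1
        omega
      have key : (x + h) ^ (i + 1) - x ^ (i + 1) - ((i : K) + 1) * x ^ (i + 1 - 1) * h
          = (x + h) * ((x + h) ^ i - x ^ i - (i : K) * x ^ (i - 1) * h)
            + (i : K) * (x ^ (i - 1) * x - x ^ i) * h + (i : K) * x ^ (i - 1) * h * h := by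
        simp only [Nat.add_sub_cancel]
        ring
      rw [key, hpow, sub_self, mul_zero, zero_mul, add_zero]
      refine (norm_add_le_max _ _).trans (max_le ?_ ?_)
      · calc ‖(x + h) * ((x + h) ^ i - x ^ i - (i : K) * x ^ (i - 1) * h)‖
            = ‖x + h‖ * ‖(x + h) ^ i - x ^ i - (i : K) * x ^ (i - 1) * h‖ := norm_mul _ _
          _ ≤ 1 * ‖h‖ ^ 2 := mul_le_mul ((norm_add_le_max x h).trans (max_le hx hh)) ih
              (norm_nonneg _) zero_le_one
          _ = ‖h‖ ^ 2 := one_mul _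
      · calc ‖(i : K) * x ^ (i - 1) * h * h‖
            = ‖(i : K)‖ * ‖x ^ (i - 1)‖ * ‖h‖ * ‖h‖ := by
              rw [norm_mul, norm_mul, norm_mul]
          _ ≤ 1 * 1 * ‖h‖ * ‖h‖ := by
              have h1 := IsUltrametricDist.norm_natCast_le_one K i
              have h2 : ‖x ^ (i - 1)‖ ≤ 1 :=
                (norm_pow_le x (i - 1)).trans (pow_le_one₀ (norm_nonneg _) hx)
              gcongr
          _ = ‖h‖ ^ 2 := by ring

/-- The key Taylor estimate for `evalPS`. -/
lemma evalPS_taylor (ha : ∀ i, ‖a i‖ ≤ 1) (ha0 : Tendsto a atTop (𝓝 0)) {x h : K} (hx : ‖x‖ ≤ 1) (hh : ‖h‖ ≤ 1) :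
    ‖evalPS a (x + h) - evalPS a x - h * dPS a x‖ ≤ ‖h‖ ^ 2 := by
  have hxh : ‖x + h‖ ≤ 1 := (norm_add_le_max x h).trans (max_le hx hh)
  have S1 : Summable fun i => a i * (x + h) ^ i := aux_sum1' ha0 hxh
  have S2 : Summable fun i => a i * x ^ i := aux_sum1' ha0 hx
  set c : ℕ → K := fun i => a i * ((i : K) * x ^ (i - 1) * h) with hc
  have Sc : Summable c := by
    refine aux_summable (squeeze_zero (fun i => norm_nonneg _) (fun i => ?_)
      (aux_norm_a0 ha0))
    calc ‖c i‖ = ‖a i‖ * (‖(i : K)‖ * ‖x ^ (i - 1)‖ * ‖h‖) := by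
          simp only [hc, norm_mul]
      _ ≤ ‖a i‖ * (1 * 1 * 1) := by
          have h1 := IsUltrametricDist.norm_natCast_le_one K i
          have h2 : ‖x ^ (i - 1)‖ ≤ 1 :=
            (norm_pow_le x (i - 1)).trans (pow_le_one₀ (norm_nonneg _) hx)
          gcongr
      _ = ‖a i‖ := by ring
  have hshift : h * dPS a x = ∑' i : ℕ, c i := by
    rw [Summable.tsum_eq_zero_add Sc]
    have hc0 : c 0 = 0 := by simp [hc]
    rw [hc0, zero_add]
    rw [dPS, ← tsum_mul_left]
    congr 1
    funext i
    simp only [hc, Nat.add_sub_cancel, Nat.cast_add, Nat.cast_one]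
    ring
  have key : evalPS a (x + h) - evalPS a x - h * dPS a x
      = ∑' i : ℕ, (a i * ((x + h) ^ i - x ^ i - (i : K) * x ^ (i - 1) * h)) := by
    rw [hshift, evalPS, evalPS, ← Summable.tsum_sub S1 S2, ← Summable.tsum_sub (S1.sub S2) Sc]
    congr 1
    funext i
    simp only [hc]
    ring
  rw [key]
  refine norm_tsum_le_of_forall_le_of_nonneg (by positivity) (fun i => ?_)
  calc ‖a i * ((x + h) ^ i - x ^ i - (i : K) * x ^ (i - 1) * h)‖
      = ‖a i‖ * ‖(x + h) ^ i - x ^ i - (i : K) * x ^ (i - 1) * h‖ := norm_mul _ _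
    _ ≤ 1 * ‖h‖ ^ 2 := mul_le_mul (ha i) (aux_pow_taylor hx hh i) (norm_nonneg _) zero_le_one
    _ = ‖h‖ ^ 2 := one_mul _

/-- `evalPS a` is Lipschitz with constant 1 on the unit ball. -/
lemma evalPS_lip (ha : ∀ i, ‖a i‖ ≤ 1) (ha0 : Tendsto a atTop (𝓝 0)) {x : K} {h : K} (hx : ‖x‖ ≤ 1) (hh : ‖h‖ ≤ 1) :
    ‖evalPS a (x + h) - evalPS a x‖ ≤ ‖h‖ := by
  have hxh : ‖x + h‖ ≤ 1 := (norm_add_le_max x h).trans (max_le hx hh)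
  have S1 : Summable fun i => a i * (x + h) ^ i := aux_sum1' ha0 hxh
  have S2 : Summable fun i => a i * x ^ i := aux_sum1' ha0 hx
  have key : evalPS a (x + h) - evalPS a x = ∑' i : ℕ, a i * ((x + h) ^ i - x ^ i) := by
    rw [evalPS, evalPS, ← Summable.tsum_sub S1 S2]
    congr 1; funext i; ring
  rw [key]
  refine norm_tsum_le_of_forall_le_of_nonneg (norm_nonneg _) (fun i => ?_)
  calc ‖a i * ((x + h) ^ i - x ^ i)‖ = ‖a i‖ * ‖(x + h) ^ i - x ^ i‖ := norm_mul _ _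
    _ ≤ 1 * ‖h‖ := mul_le_mul (ha i) (aux_pow_lip hx hh i) (norm_nonneg _) zero_le_one
    _ = ‖h‖ := one_mul _

/-- `evalPS a` is differentiable on the unit ball with derivative `dPS a`. -/
lemma evalPS_hasDerivAt (ha : ∀ i, ‖a i‖ ≤ 1) (ha0 : Tendsto a atTop (𝓝 0)) {x : K} (hx : ‖x‖ ≤ 1) :
    HasDerivAt (evalPS a) (dPS a x) x := by
  rw [hasDerivAt_iff_isLittleO]
  rw [Asymptotics.isLittleO_iff]
  intro c hc
  have hmem : Metric.ball x (min 1 c) ∈ 𝓝 x :=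
    Metric.ball_mem_nhds x (lt_min one_pos hc)
  filter_upwards [hmem] with y hy
  rw [Metric.mem_ball, dist_eq_norm] at hy
  have hylt1 : ‖y - x‖ ≤ 1 := le_of_lt (lt_of_lt_of_le hy (min_le_left _ _))
  have hyltc : ‖y - x‖ ≤ c := le_of_lt (lt_of_lt_of_le hy (min_le_right _ _))
  have := evalPS_taylor ha ha0 hx hylt1 (h := y - x)
  rw [add_sub_cancel] at this
  calc ‖evalPS a y - evalPS a x - (y - x) • dPS a x‖
      = ‖evalPS a y - evalPS a x - (y - x) * dPS a x‖ := by rw [smul_eq_mul]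
    _ ≤ ‖y - x‖ ^ 2 := this
    _ = ‖y - x‖ * ‖y - x‖ := sq ‖y - x‖
    _ ≤ c * ‖y - x‖ := mul_le_mul_of_nonneg_right hyltc (norm_nonneg _)

/-- Combined induction: iterates preserve the unit ball, are 1-Lipschitz, and satisfy the
second-order Taylor estimate with the actual derivative. -/
lemma iter_props (ha : ∀ i, ‖a i‖ ≤ 1) (ha0 : Tendsto a atTop (𝓝 0)) (k : ℕ) : ∀ x : K, ‖x‖ ≤ 1 →
    ‖(evalPS a)^[k] x‖ ≤ 1 ∧
    ∃ d : K, ‖d‖ ≤ 1 ∧ HasDerivAt ((evalPS a)^[k]) d x ∧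
      ∀ h : K, ‖h‖ ≤ 1 →
        ‖(evalPS a)^[k] (x + h) - (evalPS a)^[k] x‖ ≤ ‖h‖ ∧
        ‖(evalPS a)^[k] (x + h) - (evalPS a)^[k] x - h * d‖ ≤ ‖h‖ ^ 2 := by
  induction k with
  | zero =>
    intro x hx
    refine ⟨by simpa using hx, 1, by simp, by simpa using hasDerivAt_id x, fun h hh => ?_⟩
    simp
  | succ k ih =>
    intro x hx
    obtain ⟨hb, d, hd1, hdd, hlip⟩ := ih x hx
    set y := (evalPS a)^[k] x with hy
    have hiter : ∀ z : K, (evalPS a)^[k + 1] z = evalPS a ((evalPS a)^[k] z) := fun z =>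
      Function.iterate_succ_apply' _ _ _
    have hDa : HasDerivAt (evalPS a) (dPS a y) y := evalPS_hasDerivAt ha ha0 hb
    have hcomp : HasDerivAt ((evalPS a)^[k + 1]) (dPS a y * d) x := by
      have := HasDerivAt.comp x hDa hdd
      have heq : evalPS a ∘ (evalPS a)^[k] = (evalPS a)^[k + 1] :=
        (Function.iterate_succ' _ _).symm
      rwa [heq] at this
    refine ⟨by rw [hiter]; exact evalPS_bound ha hb, dPS a y * d, ?_, hcomp, fun h hh => ?_⟩
    · calc ‖dPS a y * d‖ = ‖dPS a y‖ * ‖d‖ := norm_mul _ _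
        _ ≤ 1 * 1 := mul_le_mul (dPS_bound ha hb) hd1 (norm_nonneg _) zero_le_one
        _ = 1 := one_mul _
    · obtain ⟨hl, hq⟩ := hlip h hh
      set e := (evalPS a)^[k] (x + h) - (evalPS a)^[k] x with he
      have hye : (evalPS a)^[k] (x + h) = y + e := by rw [he, hy]; ring
      have he1 : ‖e‖ ≤ 1 := hl.trans hh
      have hlip1 : ‖(evalPS a)^[k + 1] (x + h) - (evalPS a)^[k + 1] x‖ ≤ ‖e‖ := by
        rw [hiter, hiter, hye]
        exact evalPS_lip ha ha0 hb he1
      constructor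
      · exact hlip1.trans hl
      · have key : (evalPS a)^[k + 1] (x + h) - (evalPS a)^[k + 1] x - h * (dPS a y * d)
            = (evalPS a (y + e) - evalPS a y - e * dPS a y) + (e - h * d) * dPS a y := by
          rw [hiter, hiter, hye, ← hy]
          ring
        rw [key]
        refine (norm_add_le_max _ _).trans (max_le ?_ ?_)
        · refine (evalPS_taylor ha ha0 hb he1).trans ?_
          have := hl
          calc ‖e‖ ^ 2 = ‖e‖ * ‖e‖ := sq ‖e‖
            _ ≤ ‖h‖ * ‖h‖ := mul_le_mul hl hl (norm_nonneg _) (norm_nonneg _)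
            _ = ‖h‖ ^ 2 := (sq ‖h‖).symm
        · calc ‖(e - h * d) * dPS a y‖ = ‖e - h * d‖ * ‖dPS a y‖ := norm_mul _ _
            _ ≤ ‖h‖ ^ 2 * 1 := mul_le_mul hq (dPS_bound ha hb) (norm_nonneg _) (by positivity)
            _ = ‖h‖ ^ 2 := mul_one _

end Aux

/-- let `φ ∈ O_K⟨x⟩`, `k, n ≥ 1`, `ψ = φ^{∘k}`, and `x ∈ O_K` with
`ψ(x) ≡ x (mod πⁿ)`.  With `aₙ(x) = ψ'(x)` and `bₙ(x) = (ψ(x) − x)/πⁿ ∈ O_K`, for all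
`t ∈ O_K`: `bₙ(x + πⁿt) ≡ bₙ(x) + t(aₙ(x) − 1) (mod πⁿ)`. -/
theorem statement7 {K : Type*} [NontriviallyNormedField K] [IsUltrametricDist K]
    [CompleteSpace K]
    (π : K) (hπ0 : 0 < ‖π‖) (hπ1 : ‖π‖ < 1) (hπmax : ∀ y : K, ‖y‖ < 1 → ‖y‖ ≤ ‖π‖)
    (a : ℕ → K) (ha : ∀ i, ‖a i‖ ≤ 1) (ha0 : Tendsto a atTop (𝓝 0))
    (k n : ℕ) (hk : 1 ≤ k) (hn : 1 ≤ n)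
    (x : K) (hx : ‖x‖ ≤ 1) (hfix : ‖(evalPS a)^[k] x - x‖ ≤ ‖π‖ ^ n)
    (t : K) (ht : ‖t‖ ≤ 1) :
    ‖((evalPS a)^[k] (x + π ^ n * t) - (x + π ^ n * t)) / π ^ n -
        (((evalPS a)^[k] x - x) / π ^ n + t * (deriv ((evalPS a)^[k]) x - 1))‖
      ≤ ‖π‖ ^ n := by
  obtain ⟨hb, d, hd1, hdd, hlip⟩ := iter_props ha ha0 k x hx
  have hderiv : deriv ((evalPS a)^[k]) x = d := hdd.deriv
  have hπ0' : π ≠ 0 := by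
    intro h0; rw [h0, norm_zero] at hπ0; exact lt_irrefl 0 hπ0
  have hπn0 : (π : K) ^ n ≠ 0 := pow_ne_zero _ hπ0'
  set h : K := π ^ n * t with hhdef
  have hπn1 : ‖π‖ ^ n ≤ 1 := pow_le_one₀ (norm_nonneg _) hπ1.le
  have hhle : ‖h‖ ≤ ‖π‖ ^ n := by
    rw [hhdef, norm_mul, norm_pow]
    calc ‖π‖ ^ n * ‖t‖ ≤ ‖π‖ ^ n * 1 := mul_le_mul_of_nonneg_left ht (by positivity)
      _ = ‖π‖ ^ n := mul_one _
  have hh1 : ‖h‖ ≤ 1 := hhle.trans hπn1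
  obtain ⟨-, hq⟩ := hlip h hh1
  have keyexpr : ((evalPS a)^[k] (x + π ^ n * t) - (x + π ^ n * t)) / π ^ n -
        (((evalPS a)^[k] x - x) / π ^ n + t * (d - 1))
      = ((evalPS a)^[k] (x + h) - (evalPS a)^[k] x - h * d) / π ^ n := by
    rw [hhdef]
    field_simp
    ring
  rw [hderiv, keyexpr, norm_div, norm_pow]
  rw [div_le_iff₀ (by positivity)]
  calc ‖(evalPS a)^[k] (x + h) - (evalPS a)^[k] x - h * d‖
      ≤ ‖h‖ ^ 2 := hq
    _ ≤ (‖π‖ ^ n) ^ 2 := by gcongr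
    _ = ‖π‖ ^ n * ‖π‖ ^ n := sq _
end

section
/- Let φ ∈ O_K⟨x⟩, k, n ≥ 1, ψ = φ^{∘k}, and x ∈ O_K with ψ(x) ≡ x (mod πⁿ). With b_n(x) = (ψ(x) − x)/πⁿ, one has b_n(φ(x)) ≡ b_n(x)·φ'(x) (mod πⁿ) (note φ(x) also satisfies ψ(φ(x)) ≡ φ(x) mod πⁿ). -/
set_option maxHeartbeats 1000000


open Filter Topology

/-- Coefficients of the formal derivative of `∑ aᵢxⁱ`. -/
noncomputable def derivCoeff {K : Type*} [NormedField K] (a : ℕ → K) : ℕ → K :=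
  fun i => ((i + 1 : ℕ) : K) * a (i + 1)

section Aux

variable {K : Type*} [NontriviallyNormedField K] [IsUltrametricDist K] [CompleteSpace K]

lemma summable_aux {c : ℕ → K} (hc : Tendsto c atTop (𝓝 0)) {x : K} (hx : ‖x‖ ≤ 1) :
    Summable (fun i => c i * x ^ i) := by
  apply NonarchimedeanAddGroup.summable_of_tendsto_cofinite_zero
  rw [Nat.cofinite_eq_atTop]
  rw [tendsto_zero_iff_norm_tendsto_zero]
  have hb : Tendsto (fun i => ‖c i‖) atTop (𝓝 0) := by
    simpa using hc.norm
  refine squeeze_zero (fun i => norm_nonneg _) (fun i => ?_) hb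
  rw [norm_mul]
  calc ‖c i‖ * ‖x ^ i‖ ≤ ‖c i‖ * 1 := by
        refine mul_le_mul_of_nonneg_left ?_ (norm_nonneg _)
        calc ‖x ^ i‖ = ‖x‖ ^ i := norm_pow x i
        _ ≤ 1 := pow_le_one₀ (norm_nonneg x) hx
  _ = ‖c i‖ := mul_one _

lemma eval_norm_le {c : ℕ → K} (hc : ∀ i, ‖c i‖ ≤ 1) {x : K} (hx : ‖x‖ ≤ 1) :
    ‖evalPS c x‖ ≤ 1 := by
  refine IsUltrametricDist.norm_tsum_le_of_forall_le_of_nonneg zero_le_one fun i => ?_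
  rw [norm_mul, norm_pow]
  exact mul_le_one₀ (hc i) (pow_nonneg (norm_nonneg x) i) (pow_le_one₀ (norm_nonneg x) hx)

lemma pow_taylor (x y : K) (hx : ‖x‖ ≤ 1) (hy : ‖y‖ ≤ 1) (m : ℕ) :
    ‖y ^ (m + 1) - x ^ (m + 1) - ((m + 1 : ℕ) : K) * x ^ m * (y - x)‖ ≤ ‖y - x‖ ^ 2 := by
  induction m with
  | zero => simp [mul_nonneg (norm_nonneg (y - x)) (norm_nonneg (y - x)), sq]
  | succ m ih =>
    have key : y ^ (m + 2) - x ^ (m + 2) - ((m + 2 : ℕ) : K) * x ^ (m + 1) * (y - x) =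
        y * (y ^ (m + 1) - x ^ (m + 1) - ((m + 1 : ℕ) : K) * x ^ m * (y - x)) +
          ((m + 1 : ℕ) : K) * x ^ m * (y - x) ^ 2 := by
      push_cast
      ring
    rw [key]
    refine (IsUltrametricDist.norm_add_le_max _ _).trans (max_le ?_ ?_)
    · calc ‖y * (y ^ (m + 1) - x ^ (m + 1) - ((m + 1 : ℕ) : K) * x ^ m * (y - x))‖
          = ‖y‖ * ‖y ^ (m + 1) - x ^ (m + 1) - ((m + 1 : ℕ) : K) * x ^ m * (y - x)‖ :=
            norm_mul _ _
      _ ≤ 1 * (‖y - x‖ ^ 2) := mul_le_mul hy ih (norm_nonneg _) zero_le_one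
      _ = ‖y - x‖ ^ 2 := one_mul _
    · rw [norm_mul, norm_mul, norm_pow, norm_pow]
      calc ‖((m + 1 : ℕ) : K)‖ * ‖x‖ ^ m * ‖y - x‖ ^ 2 ≤ 1 * 1 * ‖y - x‖ ^ 2 := by
            refine mul_le_mul (mul_le_mul ?_ (pow_le_one₀ (norm_nonneg x) hx)
              (pow_nonneg (norm_nonneg x) m) zero_le_one) le_rfl
              (pow_nonneg (norm_nonneg _) 2) (by norm_num)
            exact IsUltrametricDist.norm_natCast_le_one K _
      _ = ‖y - x‖ ^ 2 := by ring

lemma taylor_est (a : ℕ → K) (ha : ∀ i, ‖a i‖ ≤ 1) (ha0 : Tendsto a atTop (𝓝 0))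
    {x y : K} (hx : ‖x‖ ≤ 1) (hy : ‖y‖ ≤ 1) :
    ‖evalPS a y - evalPS a x - (y - x) * evalPS (derivCoeff a) x‖ ≤ ‖y - x‖ ^ 2 := by
  have hd0 : Tendsto (derivCoeff a) atTop (𝓝 0) := by
    rw [tendsto_zero_iff_norm_tendsto_zero]
    have hb : Tendsto (fun i => ‖a (i + 1)‖) atTop (𝓝 0) := by
      simpa using (ha0.comp (tendsto_add_atTop_nat 1)).norm
    refine squeeze_zero (fun i => norm_nonneg _) (fun i => ?_) hb
    rw [derivCoeff, norm_mul]
    calc ‖((i + 1 : ℕ) : K)‖ * ‖a (i + 1)‖ ≤ 1 * ‖a (i + 1)‖ :=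
          mul_le_mul_of_nonneg_right (IsUltrametricDist.norm_natCast_le_one K _) (norm_nonneg _)
    _ = ‖a (i + 1)‖ := one_mul _
  have hsy : Summable (fun i => a i * y ^ i) := summable_aux ha0 hy
  have hsx : Summable (fun i => a i * x ^ i) := summable_aux ha0 hx
  have hsd : Summable (fun i => derivCoeff a i * x ^ i) := summable_aux hd0 hx
  have hf : Summable (fun i => a i * y ^ i - a i * x ^ i) := hsy.sub hsx
  have hfs : Summable (fun i => a (i + 1) * y ^ (i + 1) - a (i + 1) * x ^ (i + 1)) :=
    (summable_nat_add_iff 1).mpr hf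
  have hds : Summable (fun i => (y - x) * (derivCoeff a i * x ^ i)) := hsd.mul_left _
  have key : evalPS a y - evalPS a x - (y - x) * evalPS (derivCoeff a) x =
      ∑' i, a (i + 1) * (y ^ (i + 1) - x ^ (i + 1) - ((i + 1 : ℕ) : K) * x ^ i * (y - x)) := by
    have h1 : evalPS a y - evalPS a x = ∑' i, (a i * y ^ i - a i * x ^ i) :=
      (Summable.tsum_sub hsy hsx).symm
    have h2 : (y - x) * evalPS (derivCoeff a) x = ∑' i, (y - x) * (derivCoeff a i * x ^ i) :=
      (tsum_mul_left).symm
    rw [h1, h2, Summable.tsum_eq_zero_add hf]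
    simp only [pow_zero, mul_one, sub_self, zero_add]
    rw [← Summable.tsum_sub hfs hds]
    refine tsum_congr fun i => ?_
    rw [derivCoeff]
    ring
  rw [key]
  refine IsUltrametricDist.norm_tsum_le_of_forall_le_of_nonneg
    (pow_nonneg (norm_nonneg _) 2) fun i => ?_
  rw [norm_mul]
  calc ‖a (i + 1)‖ * ‖y ^ (i + 1) - x ^ (i + 1) - ((i + 1 : ℕ) : K) * x ^ i * (y - x)‖
      ≤ 1 * ‖y - x‖ ^ 2 :=
        mul_le_mul (ha _) (pow_taylor x y hx hy i) (norm_nonneg _) zero_le_one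
  _ = ‖y - x‖ ^ 2 := one_mul _

end Aux

/-- let `φ ∈ O_K⟨x⟩`, `k, n ≥ 1`, `ψ = φ^{∘k}` and `x ∈ O_K` with
`ψ(x) ≡ x (mod πⁿ)`.  With `bₙ(y) = (ψ(y) − y)/πⁿ`, one has
`bₙ(φ(x)) ≡ bₙ(x)·φ'(x) (mod πⁿ)`. -/
theorem statement8 {K : Type*} [NontriviallyNormedField K] [IsUltrametricDist K]
    [CompleteSpace K]
    (π : K) (hπ0 : 0 < ‖π‖) (hπ1 : ‖π‖ < 1) (hπmax : ∀ y : K, ‖y‖ < 1 → ‖y‖ ≤ ‖π‖)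
    (a : ℕ → K) (ha : ∀ i, ‖a i‖ ≤ 1) (ha0 : Tendsto a atTop (𝓝 0))
    (k n : ℕ) (hk : 1 ≤ k) (hn : 1 ≤ n)
    (x : K) (hx : ‖x‖ ≤ 1) (hfix : ‖(evalPS a)^[k] x - x‖ ≤ ‖π‖ ^ n) :
    ‖((evalPS a)^[k] (evalPS a x) - evalPS a x) / π ^ n -
        ((evalPS a)^[k] x - x) / π ^ n * evalPS (derivCoeff a) x‖ ≤ ‖π‖ ^ n := by
  set f := evalPS a with hf
  set y := f^[k] x with hyd
  have hcomm : f^[k] (f x) = f y := by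
    rw [hyd, ← Function.iterate_succ_apply f k x, Function.iterate_succ_apply' f k x]
  have hπn1 : ‖π‖ ^ n ≤ 1 := pow_le_one₀ hπ0.le hπ1.le
  have hy1 : ‖y‖ ≤ 1 := by
    calc ‖y‖ = ‖(y - x) + x‖ := by ring_nf
    _ ≤ max ‖y - x‖ ‖x‖ := IsUltrametricDist.norm_add_le_max _ _
    _ ≤ 1 := max_le (hfix.trans hπn1) hx
  have htay : ‖f y - f x - (y - x) * evalPS (derivCoeff a) x‖ ≤ ‖y - x‖ ^ 2 :=
    taylor_est a ha ha0 hx hy1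
  have hrw : (f^[k] (f x) - f x) / π ^ n - (y - x) / π ^ n * evalPS (derivCoeff a) x =
      (f y - f x - (y - x) * evalPS (derivCoeff a) x) / π ^ n := by
    rw [hcomm]
    ring
  rw [hrw, norm_div, norm_pow, div_le_iff₀ (pow_pos hπ0 n)]
  calc ‖f y - f x - (y - x) * evalPS (derivCoeff a) x‖ ≤ ‖y - x‖ ^ 2 := htay
  _ ≤ (‖π‖ ^ n) ^ 2 := by
      refine pow_le_pow_left₀ (norm_nonneg _) hfix 2
  _ = ‖π‖ ^ n * ‖π‖ ^ n := sq _
end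

section
/- Let φ ∈ O_K⟨x⟩, k, n, r ≥ 1. Let ψ = φ^{∘k} and suppose x ∈ O_K satisfies ψ(x) ≡ x (mod πⁿ). Define a_n(x) = ψ'(x), b_n(x) = (ψ(x)−x)/πⁿ, a_{n+1}(x) = (ψ^{∘r})'(x), and b_{n+1} via ψ^{∘r}(x) ≡ x (mod πⁿ). Then: (i) (ψ^{∘r})'(x) ≡ a_n(x)^r (mod πⁿ); (ii) ψ^{∘r}(x) − x ≡ πⁿ b_n(x)(1 + a_n(x) + ⋯ + a_n(x)^{r−1}) (mod π^{2n}). -/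
open Filter Topology

set_option linter.unusedSectionVars false

namespace S10

variable {K : Type*} [NontriviallyNormedField K] [IsUltrametricDist K] [CompleteSpace K]

open IsUltrametricDist

lemma norm_sub_le_max' (x y : K) : ‖y - x‖ ≤ max ‖y‖ ‖x‖ := by
  rw [sub_eq_add_neg]
  exact (norm_add_le_max _ _).trans (by rw [norm_neg])

/-- Summability from decay of norms, in a complete ultrametric field. -/
lemma summable_of_norm_tendsto_zero {f : ℕ → K}
    (hf : Tendsto (fun i => ‖f i‖) atTop (𝓝 0)) : Summable f := by
  rw [summable_iff_vanishing_norm]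
  intro ε hε
  obtain ⟨N, hN⟩ := (Filter.eventually_atTop).1 (hf.eventually_lt_const (half_pos hε))
  refine ⟨Finset.range N, fun t ht => ?_⟩
  have : ‖∑ i ∈ t, f i‖ ≤ ε / 2 := by
    refine norm_sum_le_of_forall_le_of_nonneg (half_pos hε).le fun i hi => (hN i ?_).le
    by_contra h
    exact (Finset.disjoint_left.1 ht) hi (Finset.mem_range.2 (by omega))
  linarith

lemma summable_aux {a : ℕ → K} (ha0 : Tendsto a atTop (𝓝 0)) {b : ℕ → K}
    (hb : ∀ i, ‖b i‖ ≤ ‖a i‖) : Summable b :=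
  summable_of_norm_tendsto_zero
    (squeeze_zero (fun i => norm_nonneg _) hb (by simpa using ha0.norm))

/-- Formal derivative of a power series. -/
noncomputable def Dps (a : ℕ → K) (x : K) : K := ∑' i : ℕ, (i : K) * a i * x ^ (i - 1)

def Bpoly (x y : K) (m : ℕ) : K :=
  ∑ j ∈ Finset.range m, (∑ l ∈ Finset.range j, y ^ l * x ^ (j - 1 - l)) * x ^ (m - 1 - j)

lemma norm_pow_le_one {x : K} (hx : ‖x‖ ≤ 1) (m : ℕ) : ‖x ^ m‖ ≤ 1 := by
  rw [norm_pow]; exact pow_le_one₀ (norm_nonneg x) hx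

lemma Bpoly_norm_le {x y : K} (hx : ‖x‖ ≤ 1) (hy : ‖y‖ ≤ 1) (m : ℕ) : ‖Bpoly x y m‖ ≤ 1 := by
  refine norm_sum_le_of_forall_le_of_nonneg zero_le_one fun j _ => ?_
  refine (norm_mul_le _ _).trans (mul_le_one₀ ?_ (norm_nonneg _) (norm_pow_le_one hx _))
  refine norm_sum_le_of_forall_le_of_nonneg zero_le_one fun l _ => ?_
  exact (norm_mul_le _ _).trans (mul_le_one₀ (norm_pow_le_one hy _) (norm_nonneg _)
    (norm_pow_le_one hx _))

lemma key_identity (x y : K) (m : ℕ) :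
    y ^ m - x ^ m - (m : K) * x ^ (m - 1) * (y - x) = (y - x) ^ 2 * Bpoly x y m := by
  have h1 : ∀ j : ℕ, y ^ j - x ^ j =
      (∑ l ∈ Finset.range j, y ^ l * x ^ (j - 1 - l)) * (y - x) := fun j =>
    (geom_sum₂_mul y x j).symm
  have h3 : (m : K) * x ^ (m - 1) = ∑ j ∈ Finset.range m, x ^ j * x ^ (m - 1 - j) := by
    have hc : ∀ j ∈ Finset.range m, x ^ j * x ^ (m - 1 - j) = x ^ (m - 1) := by
      intro j hj
      rw [← pow_add]
      congr 1
      have := Finset.mem_range.1 hj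
      omega
    rw [Finset.sum_congr rfl hc, Finset.sum_const, Finset.card_range, nsmul_eq_mul]
  calc y ^ m - x ^ m - (m : K) * x ^ (m - 1) * (y - x)
      = (∑ j ∈ Finset.range m, y ^ j * x ^ (m - 1 - j)) * (y - x) -
          (∑ j ∈ Finset.range m, x ^ j * x ^ (m - 1 - j)) * (y - x) := by
        linear_combination (h1 m) - (y - x) * h3
    _ = (∑ j ∈ Finset.range m, (y ^ j - x ^ j) * x ^ (m - 1 - j)) * (y - x) := by
        rw [← sub_mul, ← Finset.sum_sub_distrib]
        congr 1
        exact Finset.sum_congr rfl fun j _ => (sub_mul _ _ _).symm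
    _ = (y - x) ^ 2 * Bpoly x y m := by
        unfold Bpoly
        rw [Finset.sum_congr rfl (fun j (_ : j ∈ Finset.range m) => by rw [h1 j]),
          Finset.sum_congr rfl (fun j (_ : j ∈ Finset.range m) =>
            show (∑ l ∈ Finset.range j, y ^ l * x ^ (j - 1 - l)) * (y - x) * x ^ (m - 1 - j)
              = (∑ l ∈ Finset.range j, y ^ l * x ^ (j - 1 - l)) * x ^ (m - 1 - j) * (y - x)
              from by ring),
          ← Finset.sum_mul]
        ring

section Props

variable {a : ℕ → K} (ha : ∀ i, ‖a i‖ ≤ 1) (ha0 : Tendsto a atTop (𝓝 0))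

include ha ha0

lemma term_norm_le {x : K} (hx : ‖x‖ ≤ 1) (i : ℕ) : ‖a i * x ^ i‖ ≤ ‖a i‖ :=
  (norm_mul_le _ _).trans (mul_le_of_le_one_right (norm_nonneg _) (norm_pow_le_one hx i))

lemma dterm_norm_le {x : K} (hx : ‖x‖ ≤ 1) (i : ℕ) : ‖(i : K) * a i * x ^ (i - 1)‖ ≤ ‖a i‖ := by
  refine (norm_mul_le _ _).trans ?_
  calc ‖(i : K) * a i‖ * ‖x ^ (i - 1)‖ ≤ (1 * ‖a i‖) * 1 := by
        refine mul_le_mul ((norm_mul_le _ _).trans ?_) (norm_pow_le_one hx _)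
          (norm_nonneg _) (by positivity)
        exact mul_le_mul_of_nonneg_right (norm_natCast_le_one K i) (norm_nonneg _)
    _ = ‖a i‖ := by ring

lemma summable_term {x : K} (hx : ‖x‖ ≤ 1) : Summable (fun i => a i * x ^ i) :=
  summable_aux ha0 (term_norm_le ha ha0 hx)

lemma summable_dterm {x : K} (hx : ‖x‖ ≤ 1) :
    Summable (fun i : ℕ => (i : K) * a i * x ^ (i - 1)) :=
  summable_aux ha0 (dterm_norm_le ha ha0 hx)

lemma evalPS_norm_le {x : K} (hx : ‖x‖ ≤ 1) : ‖evalPS a x‖ ≤ 1 := by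
  rw [evalPS]
  exact norm_tsum_le_of_forall_le_of_nonneg zero_le_one fun i =>
    (term_norm_le ha ha0 hx i).trans (ha i)

lemma Dps_norm_le {x : K} (hx : ‖x‖ ≤ 1) : ‖Dps a x‖ ≤ 1 := by
  rw [Dps]
  exact norm_tsum_le_of_forall_le_of_nonneg zero_le_one fun i =>
    (dterm_norm_le ha ha0 hx i).trans (ha i)

lemma norm_pow_sub_pow_le {x y : K} (hx : ‖x‖ ≤ 1) (hy : ‖y‖ ≤ 1) (m : ℕ) :
    ‖y ^ m - x ^ m‖ ≤ ‖y - x‖ := by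
  rw [← geom_sum₂_mul y x m, norm_mul]
  refine mul_le_of_le_one_left (norm_nonneg _) ?_
  refine norm_sum_le_of_forall_le_of_nonneg zero_le_one fun l _ => ?_
  exact (norm_mul_le _ _).trans (mul_le_one₀ (norm_pow_le_one hy _) (norm_nonneg _)
    (norm_pow_le_one hx _))

lemma Dps_lip {x y : K} (hx : ‖x‖ ≤ 1) (hy : ‖y‖ ≤ 1) :
    ‖Dps a y - Dps a x‖ ≤ ‖y - x‖ := by
  rw [Dps, Dps, ← Summable.tsum_sub (summable_dterm ha ha0 hy) (summable_dterm ha ha0 hx)]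
  refine norm_tsum_le_of_forall_le_of_nonneg (norm_nonneg _) fun i => ?_
  have h : (i : K) * a i * y ^ (i - 1) - (i : K) * a i * x ^ (i - 1)
      = (i : K) * a i * (y ^ (i - 1) - x ^ (i - 1)) := by ring
  rw [h]
  refine (norm_mul_le _ _).trans ?_
  calc ‖(i : K) * a i‖ * ‖y ^ (i - 1) - x ^ (i - 1)‖ ≤ 1 * ‖y - x‖ := by
        refine mul_le_mul ((norm_mul_le _ _).trans ?_)
          (norm_pow_sub_pow_le ha ha0 hx hy _) (norm_nonneg _) zero_le_one
        exact mul_le_one₀ (norm_natCast_le_one K i) (norm_nonneg _) (ha i)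
    _ = ‖y - x‖ := one_mul _

lemma taylor_eval {x y : K} (hx : ‖x‖ ≤ 1) (hy : ‖y‖ ≤ 1) :
    ‖evalPS a y - evalPS a x - Dps a x * (y - x)‖ ≤ ‖y - x‖ ^ 2 := by
  have hs1 := summable_term ha ha0 hy
  have hs2 := summable_term ha ha0 hx
  have hyx : ‖y - x‖ ≤ 1 := (norm_sub_le_max' x y).trans (max_le hy hx)
  have hs3 : Summable (fun i : ℕ => (i : K) * a i * x ^ (i - 1) * (y - x)) :=
    summable_aux ha0 fun i => (norm_mul_le _ _).trans
      ((mul_le_of_le_one_right (norm_nonneg _) hyx).trans (dterm_norm_le ha ha0 hx i))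
  have key : evalPS a y - evalPS a x - Dps a x * (y - x)
      = ∑' i, ((y - x) ^ 2 * (a i * Bpoly x y i)) := by
    rw [evalPS, evalPS, Dps, ← tsum_mul_right, ← Summable.tsum_sub hs1 hs2,
      ← Summable.tsum_sub (hs1.sub hs2) hs3]
    exact tsum_congr fun i => by linear_combination (a i) * key_identity x y i
  rw [key]
  refine norm_tsum_le_of_forall_le_of_nonneg (by positivity) fun i => ?_
  calc ‖(y - x) ^ 2 * (a i * Bpoly x y i)‖ ≤ ‖(y - x) ^ 2‖ * 1 := by
        refine (norm_mul_le _ _).trans (mul_le_mul_of_nonneg_left ?_ (norm_nonneg _))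
        exact (norm_mul_le _ _).trans (mul_le_one₀ (ha i) (norm_nonneg _) (Bpoly_norm_le hx hy i))
    _ = ‖y - x‖ ^ 2 := by rw [norm_pow, mul_one]

end Props

/-- A "nice" function on the closed unit ball: maps it to itself, with a formal derivative
satisfying a strong Taylor estimate, bounded by 1, and 1-Lipschitz. -/
structure Nice (f f' : K → K) : Prop where
  map : ∀ x : K, ‖x‖ ≤ 1 → ‖f x‖ ≤ 1
  taylor : ∀ x y : K, ‖x‖ ≤ 1 → ‖y‖ ≤ 1 → ‖f y - f x - f' x * (y - x)‖ ≤ ‖y - x‖ ^ 2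
  dbound : ∀ x : K, ‖x‖ ≤ 1 → ‖f' x‖ ≤ 1
  dlip : ∀ x y : K, ‖x‖ ≤ 1 → ‖y‖ ≤ 1 → ‖f' y - f' x‖ ≤ ‖y - x‖

lemma Nice.lip {f f' : K → K} (hN : Nice f f') {x y : K} (hx : ‖x‖ ≤ 1) (hy : ‖y‖ ≤ 1) :
    ‖f y - f x‖ ≤ ‖y - x‖ := by
  have hyx : ‖y - x‖ ≤ 1 := (norm_sub_le_max' x y).trans (max_le hy hx)
  have h : f y - f x = (f y - f x - f' x * (y - x)) + f' x * (y - x) := by ring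
  rw [h]
  refine (norm_add_le_max _ _).trans (max_le ?_ ?_)
  · exact (hN.taylor x y hx hy).trans (by nlinarith [norm_nonneg (y - x)])
  · rw [norm_mul]
    exact mul_le_of_le_one_left (norm_nonneg _) (hN.dbound x hx)

lemma nice_evalPS {a : ℕ → K} (ha : ∀ i, ‖a i‖ ≤ 1) (ha0 : Tendsto a atTop (𝓝 0)) :
    Nice (evalPS a) (Dps a) where
  map := fun x hx => evalPS_norm_le ha ha0 hx
  taylor := fun x y hx hy => taylor_eval ha ha0 hx hy
  dbound := fun x hx => Dps_norm_le ha ha0 hx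
  dlip := fun x y hx hy => Dps_lip ha ha0 hx hy

lemma Nice.comp {f f' g g' : K → K} (hf : Nice f f') (hg : Nice g g') :
    Nice (f ∘ g) (fun x => f' (g x) * g' x) where
  map := fun x hx => hf.map _ (hg.map x hx)
  taylor := by
    intro x y hx hy
    have hgx := hg.map x hx
    have hgy := hg.map y hy
    have h : f (g y) - f (g x) - f' (g x) * g' x * (y - x)
        = (f (g y) - f (g x) - f' (g x) * (g y - g x))
          + f' (g x) * (g y - g x - g' x * (y - x)) := by ring
    show ‖f (g y) - f (g x) - f' (g x) * g' x * (y - x)‖ ≤ ‖y - x‖ ^ 2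
    rw [h]
    refine (norm_add_le_max _ _).trans (max_le ?_ ?_)
    · refine (hf.taylor _ _ hgx hgy).trans ?_
      have := hg.lip hx hy
      have h0 := norm_nonneg (g y - g x)
      nlinarith [norm_nonneg (y - x)]
    · rw [norm_mul]
      exact (mul_le_of_le_one_left (norm_nonneg _) (hf.dbound _ hgx)).trans
        (hg.taylor x y hx hy)
  dbound := fun x hx => by
    rw [norm_mul]
    exact mul_le_one₀ (hf.dbound _ (hg.map x hx)) (norm_nonneg _) (hg.dbound x hx)
  dlip := by
    intro x y hx hy
    have hgx := hg.map x hx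
    have hgy := hg.map y hy
    have h : f' (g y) * g' y - f' (g x) * g' x
        = f' (g y) * (g' y - g' x) + (f' (g y) - f' (g x)) * g' x := by ring
    show ‖f' (g y) * g' y - f' (g x) * g' x‖ ≤ ‖y - x‖
    rw [h]
    refine (norm_add_le_max _ _).trans (max_le ?_ ?_)
    · rw [norm_mul]
      exact (mul_le_of_le_one_left (norm_nonneg _) (hf.dbound _ hgy)).trans
        (hg.dlip x y hx hy)
    · rw [norm_mul]
      exact (mul_le_of_le_one_right (norm_nonneg _) (hg.dbound x hx)).trans
        ((hf.dlip _ _ hgx hgy).trans (hg.lip hx hy))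

lemma Nice.id' : Nice (id : K → K) (fun _ => 1) where
  map := fun _ hx => hx
  taylor := fun x y _ _ => by simp
  dbound := fun _ _ => by simp
  dlip := fun x y _ _ => by simpa using norm_nonneg (y - x)

lemma Nice.iterate {f f' : K → K} (hf : Nice f f') (m : ℕ) :
    Nice (f^[m]) (fun x => ∏ j ∈ Finset.range m, f' (f^[j] x)) := by
  induction m with
  | zero => simpa using Nice.id'
  | succ m ih =>
      have h := hf.comp ih
      have he : f^[m + 1] = f ∘ f^[m] := Function.iterate_succ' f m
      have he' : (fun x => ∏ j ∈ Finset.range (m + 1), f' (f^[j] x))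
          = fun x => f' (f^[m] x) * ∏ j ∈ Finset.range m, f' (f^[j] x) := by
        funext x
        rw [Finset.prod_range_succ]
        ring
      rw [he, he']
      exact h

lemma Nice.hasDerivAt {f f' : K → K} (hf : Nice f f') {x : K} (hx : ‖x‖ ≤ 1) :
    HasDerivAt f (f' x) x := by
  rw [hasDerivAt_iff_isLittleO, Asymptotics.isLittleO_iff]
  intro c hc
  have hmem : Metric.ball x (min c 1) ∈ 𝓝 x := Metric.ball_mem_nhds x (by positivity)
  filter_upwards [hmem] with y hy
  rw [Metric.mem_ball, dist_eq_norm] at hy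
  have h1 : ‖y - x‖ < 1 := lt_of_lt_of_le hy (min_le_right _ _)
  have hc' : ‖y - x‖ ≤ c := (lt_of_lt_of_le hy (min_le_left _ _)).le
  have hy1 : ‖y‖ ≤ 1 := by
    have : y = (y - x) + x := by ring
    rw [this]
    exact (norm_add_le_max _ _).trans (max_le h1.le hx)
  have := hf.taylor x y hx hy1
  have h2 : ‖f y - f x - (y - x) • f' x‖ ≤ ‖y - x‖ ^ 2 := by
    rw [smul_eq_mul, mul_comm]
    exact this
  refine h2.trans ?_
  rw [sq]
  exact mul_le_mul_of_nonneg_right hc' (norm_nonneg _)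

lemma Nice.iterate_map {f f' : K → K} (hf : Nice f f') {x : K} (hx : ‖x‖ ≤ 1) (j : ℕ) :
    ‖f^[j] x‖ ≤ 1 := by
  induction j with
  | zero => simpa using hx
  | succ j ih => rw [Function.iterate_succ_apply']; exact hf.map _ ih

lemma Nice.iterate_dist {f f' : K → K} (hf : Nice f f') {x : K} {ε : ℝ} (hx : ‖x‖ ≤ 1)
    (hd : ‖f x - x‖ ≤ ε) (j : ℕ) : ‖f^[j] x - x‖ ≤ ε := by
  have hε : 0 ≤ ε := (norm_nonneg _).trans hd
  induction j with
  | zero => simpa using hε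
  | succ j ih =>
      rw [Function.iterate_succ_apply']
      have h : f (f^[j] x) - x = (f (f^[j] x) - f x) + (f x - x) := by ring
      rw [h]
      refine (norm_add_le_max _ _).trans (max_le ?_ hd)
      exact ((hf.lip hx (hf.iterate_map hx j)).trans ih)

lemma prod_cong {u : ℕ → K} {v : K} {ε : ℝ} (hε : 0 ≤ ε) (m : ℕ)
    (hu : ∀ j, j < m → ‖u j‖ ≤ 1) (hv : ‖v‖ ≤ 1)
    (huv : ∀ j, j < m → ‖u j - v‖ ≤ ε) :
    ‖∏ j ∈ Finset.range m, u j - v ^ m‖ ≤ ε := by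
  induction m with
  | zero => simpa using hε
  | succ m ih =>
      have hprod : ‖∏ j ∈ Finset.range m, u j‖ ≤ 1 := by
        rw [norm_prod]
        exact Finset.prod_le_one (fun j _ => norm_nonneg _)
          (fun j hj => hu j (by have := Finset.mem_range.1 hj; omega))
      rw [Finset.prod_range_succ, pow_succ]
      have h : (∏ j ∈ Finset.range m, u j) * u m - v ^ m * v
          = (∏ j ∈ Finset.range m, u j) * (u m - v)
            + ((∏ j ∈ Finset.range m, u j) - v ^ m) * v := by ring
      rw [h]
      refine (norm_add_le_max _ _).trans (max_le ?_ ?_)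
      · rw [norm_mul]
        exact (mul_le_of_le_one_left (norm_nonneg _) hprod).trans (huv m (by omega))
      · rw [norm_mul]
        refine (mul_le_of_le_one_right (norm_nonneg _) hv).trans
          (ih (fun j hj => hu j (by omega)) (fun j hj => huv j (by omega)))

end S10

/-- let `φ ∈ O_K⟨x⟩`, `k, n, r ≥ 1`, `ψ = φ^{∘k}` and `x ∈ O_K` with
`ψ(x) ≡ x (mod πⁿ)`.  With `aₙ(x) = ψ'(x)` and `bₙ(x) = (ψ(x)−x)/πⁿ`:
(i) `(ψ^{∘r})'(x) ≡ aₙ(x)^r (mod πⁿ)`;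
(ii) `ψ^{∘r}(x) − x ≡ πⁿ bₙ(x)(1 + aₙ(x) + ⋯ + aₙ(x)^{r−1}) (mod π^{2n})`. -/
theorem statement10 {K : Type*} [NontriviallyNormedField K] [IsUltrametricDist K]
    [CompleteSpace K]
    (π : K) (hπ0 : 0 < ‖π‖) (hπ1 : ‖π‖ < 1) (hπmax : ∀ y : K, ‖y‖ < 1 → ‖y‖ ≤ ‖π‖)
    (a : ℕ → K) (ha : ∀ i, ‖a i‖ ≤ 1) (ha0 : Tendsto a atTop (𝓝 0))
    (k n r : ℕ) (hk : 1 ≤ k) (hn : 1 ≤ n) (hr : 1 ≤ r)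
    (x : K) (hx : ‖x‖ ≤ 1) (hfix : ‖(evalPS a)^[k] x - x‖ ≤ ‖π‖ ^ n) :
    ‖deriv (((evalPS a)^[k])^[r]) x - (deriv ((evalPS a)^[k]) x) ^ r‖ ≤ ‖π‖ ^ n ∧
    ‖((evalPS a)^[k])^[r] x - x -
        π ^ n * (((evalPS a)^[k] x - x) / π ^ n) *
          (∑ i ∈ Finset.range r, (deriv ((evalPS a)^[k]) x) ^ i)‖ ≤ ‖π‖ ^ (2 * n) := by
  set g := evalPS a with hg
  set f := g^[k] with hfdef
  -- Nice structure for f = g^[k]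
  have hNg : S10.Nice g (S10.Dps a) := S10.nice_evalPS ha ha0
  set F' : K → K := fun z => ∏ j ∈ Finset.range k, S10.Dps a (g^[j] z) with hF'
  have hNf : S10.Nice f F' := hNg.iterate k
  have hd1 : deriv f x = F' x := (hNf.hasDerivAt hx).deriv
  have hd2 : deriv (f^[r]) x = ∏ j ∈ Finset.range r, F' (f^[j] x) :=
    ((hNf.iterate r).hasDerivAt hx).deriv
  have hεnn : (0:ℝ) ≤ ‖π‖ ^ n := by positivity
  have hdist : ∀ j, ‖f^[j] x - x‖ ≤ ‖π‖ ^ n := hNf.iterate_dist hx hfix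
  have hmapj : ∀ j, ‖f^[j] x‖ ≤ 1 := hNf.iterate_map hx
  constructor
  · -- part (i)
    rw [hd1, hd2]
    refine S10.prod_cong hεnn r (fun j _ => hNf.dbound _ (hmapj j)) (hNf.dbound _ hx)
      (fun j _ => ?_)
    exact (hNf.dlip _ _ hx (hmapj j)).trans (hdist j)
  · -- part (ii)
    have hπn : (π : K) ^ n ≠ 0 := pow_ne_zero n (by
      intro h
      rw [h, norm_zero] at hπ0
      exact lt_irrefl _ hπ0)
    rw [hd1, mul_div_cancel₀ _ hπn]
    have h2n : ‖π‖ ^ (2 * n) = (‖π‖ ^ n) ^ 2 := by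
      rw [← pow_mul, mul_comm]
    rw [h2n]
    clear hd2 hr
    induction r with
    | zero => simpa using sq_nonneg (‖π‖ ^ n)
    | succ r ih =>
        rw [Function.iterate_succ_apply', geom_sum_succ]
        have heq : f (f^[r] x) - x - (f x - x) * (F' x * ∑ i ∈ Finset.range r, F' x ^ i + 1)
            = (f (f^[r] x) - f x - F' x * (f^[r] x - x))
              + F' x * (f^[r] x - x - (f x - x) * ∑ i ∈ Finset.range r, F' x ^ i) := by
          ring
        rw [heq]
        refine (IsUltrametricDist.norm_add_le_max _ _).trans (max_le ?_ ?_)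
        · refine (hNf.taylor x _ hx (hmapj r)).trans ?_
          have := hdist r
          nlinarith [norm_nonneg (f^[r] x - x)]
        · rw [norm_mul]
          exact (mul_le_of_le_one_left (norm_nonneg _) (hNf.dbound x hx)).trans ih
end
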